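/- Suppose 0 < λ < 2 and M is nonempty. Then φ is an M-Fejér map: (i) φ(y) = y for every y ∈ M, and (ii) ‖φ(x) − y‖ < ‖x − y‖ for every x ∈ ℝⁿ \ M and every y ∈ M. -/

import Mathlib

/-- For `0 < λ < 2`, the map `φ` is `M`-Fejér: it fixes every point of `M` and
strictly decreases the distance to every point of `M` outside of `M`. -/
theorem phi_is_M_fejer
    (n m : ℕ) (hn : 1 ≤ n) (hm : 1 ≤ m)
    (a : Fin m → EuclideanSpace ℝ (Fin n)) (ha : ∀ i, a i ≠ 0)
    (b : Fin m → ℝ) (lam : ℝ) (hlam₀ : 0 < lam) (hlam₂ : lam < 2)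
    (φ : EuclideanSpace ℝ (Fin n) → EuclideanSpace ℝ (Fin n))
    (hφ : ∀ x, φ x =
      x - (lam / m) • ∑ i, ((max ((inner ℝ (a i) x : ℝ) - b i) 0) / ‖a i‖ ^ 2) • a i)
    (M : Set (EuclideanSpace ℝ (Fin n)))
    (hM : M = {x | ∀ i, (inner ℝ (a i) x : ℝ) ≤ b i})
    (hMne : M.Nonempty) :
    (∀ y ∈ M, φ y = y) ∧
    (∀ x ∉ M, ∀ y ∈ M, ‖φ x - y‖ < ‖x - y‖) := by
  have hmR : (1:ℝ) ≤ (m:ℝ) := by exact_mod_cast hm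
  have hmpos : (0:ℝ) < (m:ℝ) := by linarith
  have hna : ∀ i, (0:ℝ) < ‖a i‖ ^ 2 := fun i => pow_pos (norm_pos_iff.mpr (ha i)) 2
  constructor
  · intro y hy
    rw [hφ]
    have hz : ∀ i ∈ Finset.univ,
        ((max ((inner ℝ (a i) y : ℝ) - b i) 0) / ‖a i‖ ^ 2) • a i = 0 := by
      intro i _
      have hyi : (inner ℝ (a i) y : ℝ) ≤ b i := by rw [hM] at hy; exact hy i
      have hmax : max ((inner ℝ (a i) y : ℝ) - b i) 0 = 0 := max_eq_right (by linarith)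
      rw [hmax, zero_div, zero_smul]
    rw [Finset.sum_eq_zero hz]
    simp
  · intro x hx y hy
    rw [hM] at hy hx
    simp only [Set.mem_setOf_eq, not_forall, not_le] at hx
    simp only [Set.mem_setOf_eq] at hy
    obtain ⟨j, hj⟩ := hx
    rw [hφ x]
    set mx : Fin m → ℝ := fun i => max ((inner ℝ (a i) x : ℝ) - b i) 0 with hmxdef
    have hmx0 : ∀ i, 0 ≤ mx i := fun i => le_max_right _ _
    set u : EuclideanSpace ℝ (Fin n) := ∑ i, (mx i / ‖a i‖ ^ 2) • a i with hu
    set s : ℝ := ∑ i, mx i ^ 2 / ‖a i‖ ^ 2 with hs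
    -- s > 0
    have hmxj : 0 < mx j := lt_of_lt_of_le (by linarith) (le_max_left _ _)
    have hs_pos : 0 < s := by
      refine Finset.sum_pos' (fun i _ => by positivity) ⟨j, Finset.mem_univ j, ?_⟩
      exact div_pos (pow_pos hmxj 2) (hna j)
    -- lower bound on inner u (x - y)
    have h1 : s ≤ (inner ℝ u (x - y) : ℝ) := by
      rw [hu, sum_inner, hs]
      refine Finset.sum_le_sum (fun i _ => ?_)
      rw [real_inner_smul_left, div_mul_eq_mul_div]
      have hax : (inner ℝ (a i) x : ℝ) - b i ≤ (inner ℝ (a i) (x - y) : ℝ) := by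
        rw [inner_sub_right]
        have := hy i
        linarith
      have key : mx i * ((inner ℝ (a i) x : ℝ) - b i) = mx i ^ 2 := by
        rcases le_or_gt ((inner ℝ (a i) x : ℝ) - b i) 0 with h | h
        · have h0 : mx i = 0 := max_eq_right h
          simp [h0]
        · have h0 : mx i = (inner ℝ (a i) x : ℝ) - b i := max_eq_left h.le
          rw [h0]; ring
      have hle : mx i ^ 2 ≤ mx i * (inner ℝ (a i) (x - y) : ℝ) := by
        nlinarith [mul_le_mul_of_nonneg_left hax (hmx0 i)]
      gcongr
    -- upper bound on ‖u‖^2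
    have hnu : ‖u‖ ≤ ∑ i, mx i / ‖a i‖ := by
      refine (norm_sum_le _ _).trans_eq ?_
      refine Finset.sum_congr rfl (fun i _ => ?_)
      have hai : ‖a i‖ ≠ 0 := norm_ne_zero_iff.mpr (ha i)
      rw [norm_smul, Real.norm_eq_abs, abs_of_nonneg (by positivity)]
      field_simp
    have h2 : ‖u‖ ^ 2 ≤ (m:ℝ) * s := by
      calc ‖u‖ ^ 2 ≤ (∑ i, mx i / ‖a i‖) ^ 2 := by
            exact pow_le_pow_left₀ (norm_nonneg u) hnu 2
        _ ≤ (m:ℝ) * ∑ i, (mx i / ‖a i‖) ^ 2 := by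
            have h := sq_sum_le_card_mul_sum_sq (s := (Finset.univ : Finset (Fin m)))
              (f := fun i => mx i / ‖a i‖)
            simpa using h
        _ = (m:ℝ) * s := by
            rw [hs]
            congr 1
            exact Finset.sum_congr rfl (fun i _ => by rw [div_pow])
    -- main computation
    have e1 : x - (lam / m) • u - y = (x - y) - (lam / m) • u := sub_right_comm _ _ _
    have hlm : 0 < lam / m := div_pos hlam₀ hmpos
    have key : ‖x - (lam / m) • u - y‖ ^ 2 < ‖x - y‖ ^ 2 := by
      rw [e1, norm_sub_sq_real, real_inner_smul_right, norm_smul, Real.norm_eq_abs,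
        abs_of_pos hlm, mul_pow]
      have hi : (inner ℝ (x - y) u : ℝ) = (inner ℝ u (x - y) : ℝ) := real_inner_comm _ _
      rw [hi]
      have A : (lam / m) * s ≤ (lam / m) * (inner ℝ u (x - y) : ℝ) :=
        mul_le_mul_of_nonneg_left h1 hlm.le
      have B : (lam / m) ^ 2 * ‖u‖ ^ 2 ≤ (lam / m) ^ 2 * ((m:ℝ) * s) :=
        mul_le_mul_of_nonneg_left h2 (sq_nonneg _)
      have C : (lam / m) ^ 2 * ((m:ℝ) * s) = (lam / m) * (lam * s) := by
        field_simp
      have D : (lam / m) * (lam * s) < 2 * ((lam / m) * s) := by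
        have h2s : lam * s < 2 * s := by nlinarith
        calc (lam / m) * (lam * s) < (lam / m) * (2 * s) :=
              mul_lt_mul_of_pos_left h2s hlm
          _ = 2 * ((lam / m) * s) := by ring
      linarith
    calc ‖x - (lam / m) • u - y‖ < ‖x - y‖ := by
          exact lt_of_pow_lt_pow_left₀ 2 (norm_nonneg _) key
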